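/- Let E be a uniformly smooth real Banach space whose modulus of smoothness satisfies ρ_E(τ) ≤ K·τ^q for some constant K > 0 and some 1 < q ≤ 2. Then with M = 2^{2q}·K, for all x, y ∈ E: ‖Jx − Jy‖ ≤ M·‖x − y‖^{q−1}·max{‖x‖, ‖y‖}^{2−q}, where J is the normalized duality mapping. -/

import Mathlib

open Set

/-- Modulus of smoothness of a normed space `E`. -/
noncomputable def smoothnessModulus (E : Type*) [NormedAddCommGroup E] [NormedSpace ℝ E]
    (τ : ℝ) : ℝ :=
  sSup {t : ℝ | ∃ x y : E, ‖x‖ ≤ 1 ∧ ‖y‖ ≤ 1 ∧ t = (‖x + τ • y‖ + ‖x - τ • y‖) / 2 - 1}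

set_option maxHeartbeats 2000000

/-- From a `Nat`-power inequality to an `rpow` inequality with rational exponent. -/
private lemma rpow_le_of_pow_le' {b c xx : ℝ} (hb : 0 ≤ b) (hc : 0 ≤ c) (p n : ℕ) (hn : n ≠ 0)
    (hx : xx = (p : ℝ) / (n : ℝ)) (h : b ^ p ≤ c ^ n) : b ^ xx ≤ c := by
  subst hx
  have hq0 : (0:ℝ) < (n:ℝ) := by positivity
  have key : (b ^ ((p : ℝ) / (n : ℝ))) ^ n ≤ c ^ n := by
    have : (b ^ ((p : ℝ) / (n : ℝ))) ^ n = b ^ p := by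
      rw [← Real.rpow_natCast (b ^ ((p : ℝ) / (n : ℝ))) n, ← Real.rpow_mul hb,
        div_mul_cancel₀ _ hq0.ne', Real.rpow_natCast]
    rw [this]; exact h
  exact le_of_pow_le_pow_left₀ hn hc key

private lemma star_ineq {s : ℝ} (h0 : 0 < s) (h1 : s ≤ 1) :
    2 * (2/3 : ℝ) ^ ((1 - s)/s) + 3 * (1/4 : ℝ) ^ s ≤ 3 := by
  rcases le_or_gt s (1/50) with hs | hs
  · have hlog32 : (2/5 : ℝ) ≤ Real.log (3/2) := by
      have h5 : Real.exp (2/5) ≤ 3/2 := by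
        have e1 : Real.exp (2/5) ^ (5:ℕ) = Real.exp 2 := by
          rw [← Real.exp_nat_mul]; norm_num
        have e2 : Real.exp 2 = Real.exp 1 ^ (2:ℕ) := by
          rw [← Real.exp_nat_mul]; norm_num
        have e3 : Real.exp 1 ^ (2:ℕ) ≤ 2.7182818286 ^ (2:ℕ) := by
          apply pow_le_pow_left₀ (Real.exp_pos 1).le Real.exp_one_lt_d9.le
        have e4 : Real.exp (2/5) ^ (5:ℕ) ≤ (3/2 : ℝ) ^ (5:ℕ) := by
          rw [e1, e2]; nlinarith [e3]
        exact le_of_pow_le_pow_left₀ (by norm_num) (by norm_num) e4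
      calc (2/5 : ℝ) = Real.log (Real.exp (2/5)) := by rw [Real.log_exp]
        _ ≤ Real.log (3/2) := Real.log_le_log (Real.exp_pos _) h5
    have hlog4 : (138/100 : ℝ) ≤ Real.log 4 := by
      have : Real.log 4 = 2 * Real.log 2 := by
        rw [show (4:ℝ) = 2^(2:ℕ) by norm_num, Real.log_pow]; push_cast; ring
      rw [this]; nlinarith [Real.log_two_gt_d9]
    have hlog4' : Real.log 4 ≤ 14/10 := by
      have : Real.log 4 = 2 * Real.log 2 := by
        rw [show (4:ℝ) = 2^(2:ℕ) by norm_num, Real.log_pow]; push_cast; ring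
      rw [this]; nlinarith [Real.log_two_lt_d9]
    have b1 : (2/3 : ℝ) ^ (1/s) ≤ s/2 := by
      set z := (1/s) * Real.log (3/2) with hz
      have hzpos : 0 < z := by
        apply mul_pos (by positivity)
        linarith
      have hexp : (3/2 : ℝ) ^ (1/s) = Real.exp z := by
        rw [Real.rpow_def_of_pos (by norm_num : (0:ℝ) < 3/2), hz]; ring_nf
      have hz2 : (1/(5*s)) ≤ z/2 := by
        rw [hz]
        have e : (1:ℝ)/(5*s) = (1/s) * (1/5) := by ring
        have e2 : (1/s * Real.log (3/2))/2 = (1/s) * (Real.log (3/2)/2) := by ring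
        rw [e, e2]
        apply mul_le_mul_of_nonneg_left (by linarith) (by positivity)
      have hee : Real.exp z = Real.exp (z/2) * Real.exp (z/2) := by
        rw [← Real.exp_add]; ring_nf
      have he2 : z/2 + 1 ≤ Real.exp (z/2) := Real.add_one_le_exp _
      have hgoal : (2:ℝ)/s ≤ Real.exp z := by
        have h1s : (1:ℝ)/(5*s) ≥ 10 := by
          rw [ge_iff_le, le_div_iff₀ (by positivity)]
          nlinarith
        have hzz : Real.exp z ≥ (z/2) * (z/2) := by
          nlinarith [he2, hzpos]
        have h2 : (z/2)*(z/2) ≥ (1/(5*s)) * (1/(5*s)) := by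
          nlinarith [hz2, hzpos]
        have h3 : (1/(5*s)) * (1/(5*s)) ≥ 2/s := by
          rw [ge_iff_le, div_le_iff₀ h0]
          have e4 : (1/(5*s)) * (1/(5*s)) * s = (1/(25*s)) := by field_simp; ring
          rw [e4, le_div_iff₀ (by positivity)]
          nlinarith
        linarith
      have hinv : (2/3 : ℝ) ^ (1/s) = ((3/2 : ℝ) ^ (1/s))⁻¹ := by
        rw [show (2/3 : ℝ) = (3/2 : ℝ)⁻¹ by norm_num,
          Real.inv_rpow (by norm_num : (0:ℝ) ≤ 3/2)]
      rw [hinv, hexp]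
      have hepos : 0 < Real.exp z := Real.exp_pos z
      rw [inv_le_iff_one_le_mul₀ hepos]
      have hmm : (2:ℝ)/s * (s/2) ≤ Real.exp z * (s/2) := by
        apply mul_le_mul_of_nonneg_right hgoal (by positivity)
      have hid : (2:ℝ)/s * (s/2) = 1 := by field_simp
      nlinarith [hmm]
    have b2 : (1/4 : ℝ) ^ s ≤ 1 - s/2 := by
      set u := s * Real.log 4 with hu
      have hupos : 0 < u := by apply mul_pos h0; linarith
      have hexp : (4 : ℝ) ^ s = Real.exp u := by
        rw [Real.rpow_def_of_pos (by norm_num : (0:ℝ) < 4), hu]; ring_nf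
      have hinv : (1/4 : ℝ) ^ s = (Real.exp u)⁻¹ := by
        rw [show (1/4 : ℝ) = (4 : ℝ)⁻¹ by norm_num, Real.inv_rpow (by norm_num : (0:ℝ) ≤ 4), hexp]
      rw [hinv, ← Real.exp_neg]
      have h1 : Real.exp (-u) ≤ 1/(1+u) := by
        have := Real.add_one_le_exp u
        rw [Real.exp_neg]
        rw [inv_le_iff_one_le_mul₀ (Real.exp_pos u)]
        have h2 : (1+u) * (1/(1+u)) ≤ Real.exp u * (1/(1+u)) := by
          apply mul_le_mul_of_nonneg_right (by linarith) (by positivity)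
        have hid : (1+u) * (1/(1+u)) = 1 := by field_simp
        nlinarith [h2]
      have h2 : (1:ℝ)/(1+u) ≤ 1 - s/2 := by
        rw [div_le_iff₀ (by positivity)]
        have hul : 138/100 * s ≤ u := by
          rw [hu]; nlinarith [hlog4, h0]
        have huu : u ≤ 14/10 * s := by
          rw [hu]; nlinarith [hlog4', h0]
        nlinarith [h0, h1]
      linarith
    have hsplit : (2/3 : ℝ) ^ ((1-s)/s) = (3/2) * (2/3 : ℝ) ^ (1/s) := by
      have e : (1-s)/s = 1/s - 1 := by field_simp
      rw [e, Real.rpow_sub (by norm_num : (0:ℝ) < 2/3), Real.rpow_one]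
      ring
    rw [hsplit]
    nlinarith [b1, b2]
  · have base1 : (0:ℝ) < 1/4 := by norm_num
    have base1' : (1/4:ℝ) ≤ 1 := by norm_num
    have base2 : (0:ℝ) < 2/3 := by norm_num
    have base2' : (2/3:ℝ) ≤ 1 := by norm_num
    have step : ∀ l r A B : ℝ, ∀ pl nl mr nr : ℕ, nl ≠ 0 → nr ≠ 0 →
        l = (pl:ℝ)/nl → (1-r)/r = (mr:ℝ)/nr → 0 < r →
        (1/4:ℝ)^pl ≤ A^nl → (2/3:ℝ)^mr ≤ B^nr → 0 ≤ A → 0 ≤ B →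
        3*A + 2*B ≤ 3 → l ≤ s → s ≤ r →
        2 * (2/3 : ℝ) ^ ((1 - s)/s) + 3 * (1/4 : ℝ) ^ s ≤ 3 := by
      intro l r A B pl nl mr nr hnl hnr hl hr hrpos hA hB hA0 hB0 hsum hls hsr
      have e1 : (1/4:ℝ)^s ≤ (1/4:ℝ)^l :=
        Real.rpow_le_rpow_of_exponent_ge base1 base1' hls
      have e2 : (1/4:ℝ)^l ≤ A := rpow_le_of_pow_le' (by norm_num) hA0 pl nl hnl hl hA
      have e3 : (mr:ℝ)/nr ≤ (1-s)/s := by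
        rw [← hr]
        rw [div_le_div_iff₀ hrpos h0]
        nlinarith [hsr, hrpos, h0]
      have e4 : (2/3:ℝ)^((1-s)/s) ≤ (2/3:ℝ)^((mr:ℝ)/nr) :=
        Real.rpow_le_rpow_of_exponent_ge base2 base2' e3
      have e5 : (2/3:ℝ)^((mr:ℝ)/nr) ≤ B := rpow_le_of_pow_le' (by norm_num) hB0 mr nr hnr rfl hB
      linarith
    rcases le_or_gt s (3/100) with h2 | h2
    · exact step (1/50) (3/100) (48633/50000) (1/100000) 1 50 97 3 (by norm_num) (by norm_num)
        (by norm_num) (by norm_num) (by norm_num)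
        (by norm_num) (by norm_num) (by norm_num) (by norm_num) (by norm_num) hs.le h2
    · rcases le_or_gt s (3/25) with h3 | h3
      · exact step (3/100) (3/25) (95927/100000) (5113/100000) 3 100 22 3 (by norm_num) (by norm_num)
          (by norm_num) (by norm_num) (by norm_num)
          (by norm_num) (by norm_num) (by norm_num) (by norm_num) (by norm_num) h2.le h3
      · rcases le_or_gt s (21/100) with h4 | h4
        · exact step (3/25) (21/100) (3387/4000) (5439/25000) 3 25 79 21 (by norm_num) (by norm_num)
            (by norm_num) (by norm_num) (by norm_num)
            (by norm_num) (by norm_num) (by norm_num) (by norm_num) (by norm_num) h3.le h4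
        · rcases le_or_gt s (29/100) with h5 | h5
          · exact step (21/100) (29/100) (74743/100000) (18529/50000) 21 100 71 29 (by norm_num) (by norm_num)
              (by norm_num) (by norm_num) (by norm_num)
              (by norm_num) (by norm_num) (by norm_num) (by norm_num) (by norm_num) h4.le h5
          · rcases le_or_gt s (9/25) with h6 | h6
            · exact step (29/100) (9/25) (66897/100000) (9727/20000) 29 100 16 9 (by norm_num) (by norm_num)
                (by norm_num) (by norm_num) (by norm_num)
                (by norm_num) (by norm_num) (by norm_num) (by norm_num) (by norm_num) h5.le h6
            · rcases le_or_gt s (43/100) with h7 | h7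
              · exact step (9/25) (43/100) (6071/10000) (58423/100000) 9 25 57 43 (by norm_num) (by norm_num)
                  (by norm_num) (by norm_num) (by norm_num)
                  (by norm_num) (by norm_num) (by norm_num) (by norm_num) (by norm_num) h6.le h7
              · rcases le_or_gt s (1/2) with h8 | h8
                · exact step (43/100) (1/2) (6887/12500) (66667/100000) 43 100 1 1 (by norm_num) (by norm_num)
                    (by norm_num) (by norm_num) (by norm_num)
                    (by norm_num) (by norm_num) (by norm_num) (by norm_num) (by norm_num) h7.le h8
                · rcases le_or_gt s (29/50) with h9 | h9
                  · exact step (1/2) (29/50) (1/2) (74557/100000) 1 2 21 29 (by norm_num) (by norm_num)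
                      (by norm_num) (by norm_num) (by norm_num)
                      (by norm_num) (by norm_num) (by norm_num) (by norm_num) (by norm_num) h8.le h9
                  · rcases le_or_gt s (67/100) with h10 | h10
                    · exact step (29/50) (67/100) (2797/6250) (40949/50000) 29 50 33 67 (by norm_num) (by norm_num)
                        (by norm_num) (by norm_num) (by norm_num)
                        (by norm_num) (by norm_num) (by norm_num) (by norm_num) (by norm_num) h9.le h10
                    · rcases le_or_gt s (4/5) with h11 | h11
                      · exact step (67/100) (4/5) (39503/100000) (90361/100000) 67 100 1 4 (by norm_num) (by norm_num)
                          (by norm_num) (by norm_num) (by norm_num)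
                          (by norm_num) (by norm_num) (by norm_num) (by norm_num) (by norm_num) h10.le h11
                      · exact step (4/5) 1 (8247/25000) 1 4 5 0 1 (by norm_num) (by norm_num)
                          (by norm_num) (by norm_num) (by norm_num)
                          (by norm_num) (by norm_num) (by norm_num) (by norm_num) (by norm_num) h11.le h1

section MainAux
variable {E : Type*} [NormedAddCommGroup E] [NormedSpace ℝ E]

/-- The support-functional inequality : if `f` norms `x` then `f h ≤ (‖x+h‖² - ‖x‖²)/2`. -/
private lemma claim1 (f : E →L[ℝ] ℝ) (x : E) (hfx : f x = ‖x‖ ^ 2) (hfn : ‖f‖ = ‖x‖) (h : E) :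
    f h ≤ (‖x + h‖ ^ 2 - ‖x‖ ^ 2) / 2 := by
  have h1 : f (x + h) ≤ ‖x‖ * ‖x + h‖ := by
    calc f (x + h) ≤ |f (x + h)| := le_abs_self _
      _ = ‖f (x + h)‖ := (Real.norm_eq_abs _).symm
      _ ≤ ‖f‖ * ‖x + h‖ := f.le_opNorm _
      _ = ‖x‖ * ‖x + h‖ := by rw [hfn]
  have h2 : ‖x‖ * ‖x + h‖ ≤ (‖x‖ ^ 2 + ‖x + h‖ ^ 2) / 2 := by
    nlinarith [sq_nonneg (‖x‖ - ‖x + h‖)]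
  have h3 : f (x + h) = ‖x‖ ^ 2 + f h := by rw [map_add, hfx]
  linarith [h1, h2, h3 ▸ h1]

/-- Bound on the operator norm from values on the unit ball. -/
private lemma opnorm_le_of_unit (F : E →L[ℝ] ℝ) {B : ℝ} (h0 : 0 ≤ B)
    (h : ∀ w : E, ‖w‖ ≤ 1 → F w ≤ B) : ‖F‖ ≤ B := by
  apply F.opNorm_le_bound h0
  intro z
  rcases eq_or_ne z 0 with rfl | hz
  · simp
  · have hzpos : 0 < ‖z‖ := norm_pos_iff.2 hz
    set w := ‖z‖⁻¹ • z with hw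
    have hwn : ‖w‖ = 1 := norm_smul_inv_norm hz
    have h1 : F w ≤ B := h w (by rw [hwn])
    have h2 : F (-w) ≤ B := h (-w) (by rw [norm_neg, hwn])
    have h3 : ‖F w‖ ≤ B := by
      rw [Real.norm_eq_abs, abs_le]
      constructor
      · have he : F (-w) = -(F w) := by rw [map_neg]
        linarith [he ▸ h2]
      · exact h1
    have h4 : F z = ‖z‖ * F w := by
      rw [hw, map_smul, smul_eq_mul]
      field_simp
    rw [h4, Real.norm_eq_abs, abs_mul, abs_of_pos hzpos]
    calc ‖z‖ * |F w| ≤ ‖z‖ * B := by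
          apply mul_le_mul_of_nonneg_left _ hzpos.le
          rw [← Real.norm_eq_abs]; exact h3
      _ = B * ‖z‖ := mul_comm _ _

variable {K q : ℝ}

/-- Smoothness pair inequality from the modulus bound. -/
private lemma smooth_pair (hρ : ∀ τ > (0:ℝ), smoothnessModulus E τ ≤ K * τ ^ q)
    (u h : E) (hu : ‖u‖ ≤ 1) (hh : h ≠ 0) :
    ‖u + h‖ + ‖u - h‖ ≤ 2 + 2 * (K * ‖h‖ ^ q) := by
  have hτ : 0 < ‖h‖ := norm_pos_iff.2 hh
  set S := {t : ℝ | ∃ x y : E, ‖x‖ ≤ 1 ∧ ‖y‖ ≤ 1 ∧ t = (‖x + ‖h‖ • y‖ + ‖x - ‖h‖ • y‖) / 2 - 1}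
    with hS
  have hmem : ((‖u + h‖ + ‖u - h‖) / 2 - 1) ∈ S := by
    refine ⟨u, ‖h‖⁻¹ • h, hu, ?_, ?_⟩
    · rw [norm_smul, norm_inv, norm_norm, inv_mul_cancel₀ hτ.ne']
    · rw [smul_smul, mul_inv_cancel₀ hτ.ne', one_smul]
  have hbdd : BddAbove S := by
    refine ⟨‖h‖, fun t ht => ?_⟩
    obtain ⟨a, b, ha, hb, rfl⟩ := ht
    have e1 : ‖a + ‖h‖ • b‖ ≤ ‖a‖ + ‖h‖ * ‖b‖ := by
      calc ‖a + ‖h‖ • b‖ ≤ ‖a‖ + ‖‖h‖ • b‖ := norm_add_le _ _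
        _ = ‖a‖ + ‖h‖ * ‖b‖ := by rw [norm_smul, Real.norm_eq_abs, abs_of_pos hτ]
    have e2 : ‖a - ‖h‖ • b‖ ≤ ‖a‖ + ‖h‖ * ‖b‖ := by
      calc ‖a - ‖h‖ • b‖ ≤ ‖a‖ + ‖‖h‖ • b‖ := norm_sub_le _ _
        _ = ‖a‖ + ‖h‖ * ‖b‖ := by rw [norm_smul, Real.norm_eq_abs, abs_of_pos hτ]
    have e3 : ‖h‖ * ‖b‖ ≤ ‖h‖ := by nlinarith [hτ]
    linarith
  have h1 : (‖u + h‖ + ‖u - h‖) / 2 - 1 ≤ smoothnessModulus E ‖h‖ := le_csSup hbdd hmem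
  have h2 := hρ ‖h‖ hτ
  linarith

/-- Symmetric second difference of the squared norm, controlled by the modulus. -/
private lemma dsym (hK : 0 < K) (hq0 : 0 ≤ q)
    (hρ : ∀ τ > (0:ℝ), smoothnessModulus E τ ≤ K * τ ^ q)
    (x w : E) (t : ℝ) (ht : 0 < t) (hw : ‖w‖ ≤ 1) :
    ‖x + t • w‖ ^ 2 + ‖x - t • w‖ ^ 2 - 2 * ‖x‖ ^ 2 ≤
      2 * t ^ 2 + 4 * K * t ^ q * ‖x‖ ^ ((2:ℝ) - q) := by
  have hrp : 0 ≤ 4 * K * t ^ q * ‖x‖ ^ ((2:ℝ) - q) := by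
    have h1 := Real.rpow_nonneg (norm_nonneg x) ((2:ℝ) - q)
    have h2 := Real.rpow_nonneg ht.le q
    positivity
  rcases eq_or_ne x 0 with rfl | hx
  · have he : ‖(0:E) + t • w‖ ^ 2 + ‖(0:E) - t • w‖ ^ 2 - 2 * ‖(0:E)‖ ^ 2 = 2 * (t * ‖w‖)^2 := by
      rw [zero_add, zero_sub, norm_neg, norm_smul, Real.norm_eq_abs, abs_of_pos ht, norm_zero]
      ring
    rw [he]
    have h1 : ‖w‖ ^ 2 ≤ 1 := by nlinarith [norm_nonneg w, hw]
    nlinarith [h1, sq_nonneg t, ht]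
  rcases eq_or_ne w 0 with rfl | hw0
  · rw [smul_zero, add_zero, sub_zero]
    nlinarith [ht]
  have ha : 0 < ‖x‖ := norm_pos_iff.2 hx
  set a := ‖x‖ with haa
  set u := a⁻¹ • x with huu
  set h' := a⁻¹ • (t • w) with hh'
  have hu1 : ‖u‖ = 1 := norm_smul_inv_norm hx
  have hhne : h' ≠ 0 := by
    apply smul_ne_zero (inv_ne_zero ha.ne') (smul_ne_zero ht.ne' hw0)
  have hsp := smooth_pair hρ u h' hu1.le hhne
  have hx1 : x + t • w = a • (u + h') := by
    rw [smul_add, huu, hh', smul_inv_smul₀ ha.ne', smul_inv_smul₀ ha.ne']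
  have hx2 : x - t • w = a • (u - h') := by
    rw [smul_sub, huu, hh', smul_inv_smul₀ ha.ne', smul_inv_smul₀ ha.ne']
  have hn1 : ‖x + t • w‖ = a * ‖u + h'‖ := by
    rw [hx1, norm_smul, Real.norm_eq_abs, abs_of_pos ha]
  have hn2 : ‖x - t • w‖ = a * ‖u - h'‖ := by
    rw [hx2, norm_smul, Real.norm_eq_abs, abs_of_pos ha]
  have hnh : ‖h'‖ = a⁻¹ * (t * ‖w‖) := by
    rw [hh', norm_smul, norm_smul, Real.norm_eq_abs, Real.norm_eq_abs, abs_of_pos (by positivity),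
      abs_of_pos ht]
  have hnh2 : ‖h'‖ ≤ t / a := by
    rw [hnh, div_eq_inv_mul]
    apply mul_le_mul_of_nonneg_left _ (by positivity)
    nlinarith [ht, norm_nonneg w]
  have hr2 : ‖h'‖ ^ q ≤ (t / a) ^ q := Real.rpow_le_rpow (norm_nonneg _) hnh2 hq0
  have hr3 : (t / a) ^ q = t ^ q / a ^ q := Real.div_rpow ht.le ha.le q
  have haq : (0:ℝ) < a ^ q := Real.rpow_pos_of_pos ha q
  have hs : ‖x + t • w‖ + ‖x - t • w‖ ≤ 2 * a + 2 * K * (t ^ q / a ^ q) * a := by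
    rw [hn1, hn2]
    calc a * ‖u + h'‖ + a * ‖u - h'‖ = a * (‖u + h'‖ + ‖u - h'‖) := by ring
      _ ≤ a * (2 + 2 * (K * ‖h'‖ ^ q)) := mul_le_mul_of_nonneg_left hsp ha.le
      _ ≤ a * (2 + 2 * (K * (t ^ q / a ^ q))) := by
          apply mul_le_mul_of_nonneg_left _ ha.le
          have hKq : K * ‖h'‖ ^ q ≤ K * (t ^ q / a ^ q) := by
            apply mul_le_mul_of_nonneg_left _ hK.le
            rw [← hr3]; exact hr2
          linarith
      _ = 2 * a + 2 * K * (t ^ q / a ^ q) * a := by ring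
  have habs1 : |‖x + t • w‖ - a| ≤ t := by
    have h1 : |‖x + t • w‖ - ‖x‖| ≤ ‖x + t • w - x‖ := abs_norm_sub_norm_le _ _
    have h2 : x + t • w - x = t • w := by abel
    have h3 : ‖t • w‖ ≤ t := by
      rw [norm_smul, Real.norm_eq_abs, abs_of_pos ht]
      nlinarith [ht]
    calc |‖x + t • w‖ - a| ≤ ‖x + t • w - x‖ := h1
      _ = ‖t • w‖ := by rw [h2]
      _ ≤ t := h3
  have habs2 : |‖x - t • w‖ - a| ≤ t := by
    have h1 : |‖x - t • w‖ - ‖x‖| ≤ ‖x - t • w - x‖ := abs_norm_sub_norm_le _ _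
    have h2 : x - t • w - x = -(t • w) := by abel
    have h3 : ‖t • w‖ ≤ t := by
      rw [norm_smul, Real.norm_eq_abs, abs_of_pos ht]
      nlinarith [ht]
    calc |‖x - t • w‖ - a| ≤ ‖x - t • w - x‖ := h1
      _ = ‖t • w‖ := by rw [h2, norm_neg]
      _ ≤ t := h3
  have hq1 : (‖x + t • w‖ - a) ^ 2 ≤ t ^ 2 := by
    have hc := abs_le.mp habs1
    nlinarith [hc.1, hc.2]
  have hq2 : (‖x - t • w‖ - a) ^ 2 ≤ t ^ 2 := by
    have hc := abs_le.mp habs2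
    nlinarith [hc.1, hc.2]
  have harpow : a ^ ((2:ℝ) - q) = a ^ 2 / a ^ q := by
    rw [Real.rpow_sub ha, show ((2:ℝ)) = ((2:ℕ):ℝ) by norm_num, Real.rpow_natCast]
  have hfin : 4 * K * t ^ q * a ^ ((2:ℝ) - q) = 2 * a * (2 * K * (t ^ q / a ^ q) * a) := by
    rw [harpow]; field_simp; ring
  rw [hfin]
  have h5 : 2 * a * (‖x + t • w‖ + ‖x - t • w‖ - 2 * a) ≤ 2 * a * (2 * K * (t ^ q / a ^ q) * a) := by
    apply mul_le_mul_of_nonneg_left _ (by positivity)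
    linarith [hs]
  nlinarith [h5, hq1, hq2]

end MainAux

theorem stmt6 {E : Type*} [NormedAddCommGroup E] [NormedSpace ℝ E] [CompleteSpace E]
    (J : E → (E →L[ℝ] ℝ))
    (hJ : ∀ x : E, J x x = ‖x‖ ^ 2) (hJn : ∀ x : E, ‖J x‖ = ‖x‖)
    (K q : ℝ) (hK : 0 < K) (hq1 : 1 < q) (hq2 : q ≤ 2)
    (hρ : ∀ τ > (0:ℝ), smoothnessModulus E τ ≤ K * τ ^ q)
    (x y : E) :
    ‖J x - J y‖ ≤ (2 ^ (2 * q) * K) * ‖x - y‖ ^ (q - 1) * (max ‖x‖ ‖y‖) ^ (2 - q) := by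
  have hq0 : (0:ℝ) ≤ q := by linarith
  rcases eq_or_lt_of_le (norm_nonneg (x - y)) with hd0 | hdpos
  · -- ‖x - y‖ = 0
    have hxy : x = y := by
      rw [← sub_eq_zero]; exact norm_eq_zero.mp hd0.symm
    subst hxy
    rw [sub_self, norm_zero, sub_self, norm_zero,
      Real.zero_rpow (show q - 1 ≠ 0 by intro h; linarith [sub_eq_zero.mp h])]
    rw [mul_zero, zero_mul]
  · -- a unit vector exists
    obtain ⟨v, hv⟩ : ∃ v : E, ‖v‖ = 1 := by
      rcases eq_or_ne x 0 with rfl | hxne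
      · refine ⟨‖y‖⁻¹ • y, norm_smul_inv_norm ?_⟩
        intro h0
        rw [h0] at hdpos
        simp at hdpos
      · exact ⟨‖x‖⁻¹ • x, norm_smul_inv_norm hxne⟩
    set d := ‖x - y‖ with hdd
    set R := max ‖x‖ ‖y‖ with hRR
    have hq1ne : q - 1 ≠ 0 := sub_ne_zero.mpr (ne_of_gt hq1)
    have hd2R : d ≤ ‖x‖ + ‖y‖ := norm_sub_le x y
    have hR : 0 < R := by
      have h1 : ‖x‖ ≤ R := le_max_left _ _
      have h2 : ‖y‖ ≤ R := le_max_right _ _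
      linarith
    -- K * 4^q ≥ 3
    have hc : (0:ℝ) < (4:ℝ) ^ q := Real.rpow_pos_of_pos (by norm_num) q
    have hK4 : 3 ≤ K * (4:ℝ) ^ q := by
      have hvne : v ≠ 0 := by
        intro h0; rw [h0, norm_zero] at hv; norm_num at hv
      have h4v : ((4:ℝ) • v) ≠ 0 := smul_ne_zero (by norm_num) hvne
      have hsp := smooth_pair hρ v ((4:ℝ) • v) hv.le h4v
      have e1 : v + (4:ℝ) • v = (5:ℝ) • v := by module
      have e2 : v - (4:ℝ) • v = (-3:ℝ) • v := by module
      have e3 : ‖(5:ℝ) • v‖ = 5 := by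
        rw [norm_smul, hv, Real.norm_eq_abs]; norm_num
      have e4 : ‖(-3:ℝ) • v‖ = 3 := by
        rw [norm_smul, hv, Real.norm_eq_abs]; norm_num
      have e5 : ‖(4:ℝ) • v‖ = 4 := by
        rw [norm_smul, hv, Real.norm_eq_abs]; norm_num
      rw [e1, e2, e3, e4, e5] at hsp
      linarith
    have h2q4 : (2:ℝ) ^ (2*q) = (4:ℝ) ^ q := by
      have e1 : (2:ℝ)^(2*q) = (2:ℝ)^q * (2:ℝ)^q := by
        rw [← Real.rpow_add (by norm_num : (0:ℝ) < 2)]; ring_nf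
      rw [e1, ← Real.mul_rpow (by norm_num) (by norm_num)]
      norm_num
    have hc4 : (4:ℝ) ≤ (4:ℝ)^q := by
      calc (4:ℝ) = (4:ℝ)^(1:ℝ) := (Real.rpow_one 4).symm
        _ ≤ (4:ℝ)^q := Real.rpow_le_rpow_of_exponent_le (by norm_num) (by linarith)
    have hPpos : (0:ℝ) < d ^ (q-1) := Real.rpow_pos_of_pos hdpos _
    have hQpos : (0:ℝ) < R ^ (2-q) := Real.rpow_pos_of_pos hR _
    rw [h2q4]
    rcases le_or_gt (2 * R^(q-1)) ((4:ℝ)^q * K * d^(q-1)) with hcase | hcase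
    · -- trivial bound case
      have hFn : ‖J x - J y‖ ≤ ‖x‖ + ‖y‖ := by
        calc ‖J x - J y‖ ≤ ‖J x‖ + ‖J y‖ := norm_sub_le _ _
          _ = ‖x‖ + ‖y‖ := by rw [hJn, hJn]
      have hRsplit : R = R^(q-1) * R^(2-q) := by
        rw [← Real.rpow_add hR, show (q-1) + (2-q) = 1 by ring, Real.rpow_one]
      have hmul : (2 * R^(q-1)) * R^(2-q) ≤ ((4:ℝ)^q * K * d^(q-1)) * R^(2-q) :=
        mul_le_mul_of_nonneg_right hcase hQpos.le
      calc ‖J x - J y‖ ≤ ‖x‖ + ‖y‖ := hFn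
        _ ≤ 2 * R := by
            have h1 : ‖x‖ ≤ R := le_max_left _ _
            have h2 : ‖y‖ ≤ R := le_max_right _ _
            linarith
        _ = 2 * (R^(q-1) * R^(2-q)) := by rw [← hRsplit]
        _ = (2 * R^(q-1)) * R^(2-q) := by ring
        _ ≤ ((4:ℝ)^q * K * d^(q-1)) * R^(2-q) := hmul
        _ = (4:ℝ)^q * K * d^(q-1) * R^(2-q) := by ring
    · -- main case
      -- core estimate
      have hcore : ‖J x - J y‖ ≤ 2*d + 4*K*d^(q-1)*R^(2-q) := by
        have hkey : ∀ w : E, ‖w‖ ≤ 1 →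
            (J x - J y) w ≤ (‖J x - J y‖*d + 2*d^2 + 4*K*(d^q)*R^(2-q)) / (2*d) := by
          intro w hw
          have p1 := claim1 (J y) y (hJ y) (hJn y) ((x - d•w) - y)
          have p2 := claim1 (J x) x (hJ x) (hJn x) ((y + d•w) - x)
          have p3 := claim1 (J x) x (hJ x) (hJn x) (d•w)
          have p4 := claim1 (J y) y (hJ y) (hJn y) (-(d•w))
          have e1 : y + ((x - d•w) - y) = x - d•w := by abel
          have e2 : x + ((y + d•w) - x) = y + d•w := by abel
          have e3 : y + -(d•w) = y - d•w := by abel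
          rw [e1] at p1
          rw [e2] at p2
          rw [e3] at p4
          have q1 : (J y) ((x - d•w) - y) = (J y) x - d * ((J y) w) - (J y) y := by
            rw [map_sub, map_sub, map_smul, smul_eq_mul]
          have q2 : (J x) ((y + d•w) - x) = (J x) y + d * ((J x) w) - (J x) x := by
            rw [map_sub, map_add, map_smul, smul_eq_mul]
          have q3 : (J x) (d•w) = d * ((J x) w) := by rw [map_smul, smul_eq_mul]
          have q4 : (J y) (-(d•w)) = -(d * ((J y) w)) := by rw [map_neg, map_smul, smul_eq_mul]
          rw [q1] at p1
          rw [q2] at p2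
          rw [q3] at p3
          rw [q4] at p4
          have dsx := dsym hK hq0 hρ x w d hdpos hw
          have dsy := dsym hK hq0 hρ y w d hdpos hw
          have hax : ‖x‖^((2:ℝ)-q) ≤ R^((2:ℝ)-q) :=
            Real.rpow_le_rpow (norm_nonneg x) (le_max_left _ _) (by linarith)
          have hbx : ‖y‖^((2:ℝ)-q) ≤ R^((2:ℝ)-q) :=
            Real.rpow_le_rpow (norm_nonneg y) (le_max_right _ _) (by linarith)
          have hdqpos : (0:ℝ) ≤ 4*K*d^q := by positivity
          have hax' : 4*K*d^q*‖x‖^((2:ℝ)-q) ≤ 4*K*(d^q)*R^(2-q) :=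
            mul_le_mul_of_nonneg_left hax hdqpos
          have hbx' : 4*K*d^q*‖y‖^((2:ℝ)-q) ≤ 4*K*(d^q)*R^(2-q) :=
            mul_le_mul_of_nonneg_left hbx hdqpos
          have hxyF : (J x) x - (J x) y - (J y) x + (J y) y ≤ ‖J x - J y‖ * d := by
            have h1 : (J x - J y) (x - y) ≤ ‖J x - J y‖ * d := by
              calc (J x - J y) (x - y) ≤ |(J x - J y) (x - y)| := le_abs_self _
                _ = ‖(J x - J y) (x - y)‖ := (Real.norm_eq_abs _).symm
                _ ≤ ‖J x - J y‖ * ‖x - y‖ := (J x - J y).le_opNorm _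
            have h2 : (J x - J y) (x - y) = (J x) x - (J x) y - (J y) x + (J y) y := by
              rw [ContinuousLinearMap.sub_apply, map_sub, map_sub]; ring
            linarith [h2 ▸ h1]
          have hjx : (J x) x = ‖x‖^2 := hJ x
          have hjy : (J y) y = ‖y‖^2 := hJ y
          have hFw : (J x - J y) w = (J x) w - (J y) w := ContinuousLinearMap.sub_apply _ _ _
          rw [le_div_iff₀ (by positivity : (0:ℝ) < 2*d), hFw]
          linarith [p1, p2, p3, p4, dsx, dsy, hax', hbx', hxyF, hjx, hjy]
        have hB0 : 0 ≤ (‖J x - J y‖*d + 2*d^2 + 4*K*(d^q)*R^(2-q)) / (2*d) := by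
          have h1 : (0:ℝ) ≤ ‖J x - J y‖ := norm_nonneg _
          have h2 : (0:ℝ) < d^q := Real.rpow_pos_of_pos hdpos q
          positivity
        have hFn := opnorm_le_of_unit (J x - J y) hB0 hkey
        rw [le_div_iff₀ (by positivity : (0:ℝ) < 2*d)] at hFn
        have hdq : d ^ q = d * d^(q-1) := by
          calc d ^ q = d ^ ((1:ℝ) + (q-1)) := by norm_num
            _ = d ^ (1:ℝ) * d ^ (q-1) := Real.rpow_add hdpos 1 (q-1)
            _ = d * d^(q-1) := by rw [Real.rpow_one]
        rw [hdq] at hFn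
        -- hFn : ‖F‖ * (2d) ≤ ‖F‖d + 2d² + 4K d d^{q-1} R^{2-q}
        have hfinal : ‖J x - J y‖ * d ≤ (2*d + 4*K*d^(q-1)*R^(2-q)) * d := by linarith [hFn]
        exact le_of_mul_le_mul_right (by linarith [hfinal]) hdpos
      -- numeric chain
      have hstar := star_ineq (s := q-1) (by linarith) (by linarith)
      rw [show (1 - (q-1)) = 2 - q by ring] at hstar
      have he' : (0:ℝ) ≤ (2-q)/(q-1) := by
        apply div_nonneg <;> linarith
      have hβ : d^(q-1) ≤ (2/((4:ℝ)^q*K)) * R^(q-1) := by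
        rw [div_mul_eq_mul_div, le_div_iff₀ (by positivity)]
        linarith [hcase]
      have hβ23 : 2/((4:ℝ)^q*K) ≤ 2/3 := by
        rw [div_le_div_iff₀ (by positivity) (by norm_num)]
        linarith [hK4]
      have step2 : d^((2:ℝ)-q) ≤ (2/3:ℝ)^((2-q)/(q-1)) * R^((2:ℝ)-q) := by
        have h1 : (d^(q-1))^((2-q)/(q-1)) ≤ ((2/((4:ℝ)^q*K)) * R^(q-1))^((2-q)/(q-1)) :=
          Real.rpow_le_rpow (Real.rpow_nonneg hdpos.le _) hβ he'
        have h2 : (d^(q-1))^((2-q)/(q-1)) = d^((2:ℝ)-q) := by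
          rw [← Real.rpow_mul hdpos.le]
          congr 1
          rw [mul_comm]
          exact div_mul_cancel₀ _ hq1ne
        have h3 : ((2/((4:ℝ)^q*K)) * R^(q-1))^((2-q)/(q-1))
            = (2/((4:ℝ)^q*K))^((2-q)/(q-1)) * (R^(q-1))^((2-q)/(q-1)) :=
          Real.mul_rpow (by positivity) (Real.rpow_nonneg hR.le _)
        have h4 : (R^(q-1))^((2-q)/(q-1)) = R^((2:ℝ)-q) := by
          rw [← Real.rpow_mul hR.le]
          congr 1
          rw [mul_comm]
          exact div_mul_cancel₀ _ hq1ne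
        have h5 : (2/((4:ℝ)^q*K))^((2-q)/(q-1)) ≤ (2/3:ℝ)^((2-q)/(q-1)) :=
          Real.rpow_le_rpow (by positivity) hβ23 he'
        calc d^((2:ℝ)-q) = (d^(q-1))^((2-q)/(q-1)) := h2.symm
          _ ≤ ((2/((4:ℝ)^q*K)) * R^(q-1))^((2-q)/(q-1)) := h1
          _ = (2/((4:ℝ)^q*K))^((2-q)/(q-1)) * (R^(q-1))^((2-q)/(q-1)) := h3
          _ ≤ (2/3:ℝ)^((2-q)/(q-1)) * (R^(q-1))^((2-q)/(q-1)) := by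
              apply mul_le_mul_of_nonneg_right h5 (Real.rpow_nonneg (Real.rpow_nonneg hR.le _) _)
          _ = (2/3:ℝ)^((2-q)/(q-1)) * R^((2:ℝ)-q) := by rw [h4]
      have step4 : 3 - 3*(1/4:ℝ)^(q-1) ≤ ((4:ℝ)^q - 4)*K := by
        have hinv4 : (1/4:ℝ)^(q-1) = 4/((4:ℝ)^q) := by
          rw [show (1/4:ℝ) = (4:ℝ)⁻¹ by norm_num, Real.inv_rpow (by norm_num : (0:ℝ) ≤ 4),
            Real.rpow_sub (by norm_num : (0:ℝ) < 4), Real.rpow_one, inv_div]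
        rw [hinv4]
        have hKlow : 3/((4:ℝ)^q) ≤ K := by
          rw [div_le_iff₀ hc]
          linarith [hK4]
        have h1 : ((4:ℝ)^q - 4) * (3/((4:ℝ)^q)) ≤ ((4:ℝ)^q - 4)*K :=
          mul_le_mul_of_nonneg_left hKlow (by linarith [hc4])
        have h2 : ((4:ℝ)^q - 4) * (3/((4:ℝ)^q)) = 3 - 12/((4:ℝ)^q) := by
          field_simp
          ring
        have h3 : 3 - 3*(4/((4:ℝ)^q)) = 3 - 12/((4:ℝ)^q) := by ring
        linarith [h1, h2 ▸ h1]
      have hdsplit : d = d^(q-1) * d^((2:ℝ)-q) := by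
        rw [← Real.rpow_add hdpos, show (q-1) + (2-q) = 1 by ring, Real.rpow_one]
      have step5 : 2*d ≤ ((4:ℝ)^q - 4)*K*(d^(q-1)*R^(2-q)) := by
        have h1 : 2*d = 2*(d^(q-1) * d^((2:ℝ)-q)) := by rw [← hdsplit]
        have h2 : d^(q-1) * d^((2:ℝ)-q) ≤ d^(q-1) * ((2/3:ℝ)^((2-q)/(q-1)) * R^((2:ℝ)-q)) :=
          mul_le_mul_of_nonneg_left step2 hPpos.le
        have h3 : 2*(2/3:ℝ)^((2-q)/(q-1)) ≤ ((4:ℝ)^q - 4)*K := by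
          have hrp14 : (0:ℝ) ≤ (1/4:ℝ)^(q-1) := Real.rpow_nonneg (by norm_num) _
          linarith [hstar, step4]
        have h4 : (0:ℝ) ≤ d^(q-1)*R^(2-q) := by positivity
        have h5 : 2*(2/3:ℝ)^((2-q)/(q-1))*(d^(q-1)*R^(2-q))
            ≤ (((4:ℝ)^q - 4)*K)*(d^(q-1)*R^(2-q)) := mul_le_mul_of_nonneg_right h3 h4
        nlinarith [h1, h2, h5]
      calc ‖J x - J y‖ ≤ 2*d + 4*K*d^(q-1)*R^(2-q) := hcore
        _ ≤ ((4:ℝ)^q - 4)*K*(d^(q-1)*R^(2-q)) + 4*K*d^(q-1)*R^(2-q) := by linarith [step5]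
        _ = (4:ℝ)^q * K * d^(q-1) * R^(2-q) := by ring
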